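/- For each l > 0, the set of interaction schemes { i_l(U) : U is a pair of strictly increasing sequences of form l }, viewed as finite increasing sequences, is thin: no interaction scheme is a proper initial segment of another (Larson's Lemma 3.11). -/

import Mathlib

/-- Accumulated lengths of a list of lists. -/
def accLengths : ℕ → List (List ℕ) → List ℕ
  | _, [] => []
  | acc, l :: ls => (acc + l.length) :: accLengths (acc + l.length) ls

/-- Interleaved concatenation of two lists of lists. -/
def interact : List (List ℕ) → List (List ℕ) → List ℕ
  | [], ys => ys.flatten
  | x :: xs, [] => (x :: xs).flatten
  | x :: xs, y :: ys => x ++ y ++ interact xs ys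

/-- `FormBody ka kb x y zs`: `x` decomposes into `ka` nonempty pieces, `y` into `kb`
nonempty pieces, and `zs` is the associated interaction scheme
`c ∗ a₁ ∗ d ∗ b₁ ∗ a₂ ∗ b₂ ∗ …`, which is strictly increasing (equivalently the
interleaving condition `c < a₁ < d < b₁ < a₂ < … ` holds). -/
def FormBody (ka kb : ℕ) (x y zs : List ℕ) : Prop :=
  ∃ a as b bs, x.length < y.length ∧
    x = (a :: as).flatten ∧ y = (b :: bs).flatten ∧
    (∀ l ∈ a :: as, l ≠ []) ∧ (∀ l ∈ b :: bs, l ≠ []) ∧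
    (a :: as).length = ka ∧ (b :: bs).length = kb ∧
    zs = accLengths 0 (a :: as) ++ a ++ accLengths 0 (b :: bs) ++ b ++ interact as bs ∧
    List.Pairwise (· < ·) zs

/-- `zs` is the interaction scheme `i_l({x,y})` of the pair `{x,y}` of form `l`. -/
def InterScheme (l : ℕ) (x y zs : List ℕ) : Prop :=
  (∃ k, 0 < k ∧ l = 2 * k - 1 ∧ FormBody k k x y zs) ∨
  (∃ k, 0 < k ∧ l = 2 * k ∧ FormBody (k + 1) k x y zs)

lemma accLengths_length (acc : ℕ) (L : List (List ℕ)) :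
    (accLengths acc L).length = L.length := by
  induction L generalizing acc with
  | nil => rfl
  | cons l ls ih => simp [accLengths, ih]

lemma accLengths_getLast? (acc : ℕ) (L : List (List ℕ)) (h : L ≠ []) :
    (accLengths acc L).getLast? = some (acc + L.flatten.length) := by
  induction L generalizing acc with
  | nil => exact absurd rfl h
  | cons l ls ih =>
    cases ls with
    | nil => simp [accLengths]
    | cons m ms =>
      have h2 := ih (acc + l.length) (by simp)
      rw [accLengths] at h2
      rw [accLengths, accLengths, List.getLast?_cons_cons, h2]
      simp [Nat.add_assoc]

lemma interact_length (xs ys : List (List ℕ)) :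
    (interact xs ys).length = xs.flatten.length + ys.flatten.length := by
  induction xs generalizing ys with
  | nil => simp [interact]
  | cons x xs ih =>
    cases ys with
    | nil => simp [interact]
    | cons y ys => simp [interact, ih]; omega

lemma formBody_thin (ka kb : ℕ) (x y zs x' y' zs' : List ℕ)
    (h : FormBody ka kb x y zs) (h' : FormBody ka kb x' y' zs')
    (hpre : zs <+: zs') : zs = zs' := by
  obtain ⟨a, as, b, bs, _, hx, hy, _, _, hla, hlb, hz, _⟩ := h
  obtain ⟨a', as', b', bs', _, hx', hy', _, _, hla', hlb', hz', _⟩ := h'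
  -- notation
  set C := accLengths 0 (a :: as) with hC
  set D := accLengths 0 (b :: bs) with hD
  set C' := accLengths 0 (a' :: as') with hC'
  set D' := accLengths 0 (b' :: bs') with hD'
  have hCl : C.length = ka := by rw [hC, accLengths_length, hla]
  have hDl : D.length = kb := by rw [hD, accLengths_length, hlb]
  have hCl' : C'.length = ka := by rw [hC', accLengths_length, hla']
  have hDl' : D'.length = kb := by rw [hD', accLengths_length, hlb']
  have hxl : x.length = a.length + as.flatten.length := by
    rw [hx]; simp
  have hxl' : x'.length = a'.length + as'.flatten.length := by
    rw [hx']; simp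
  have hyl : y.length = b.length + bs.flatten.length := by
    rw [hy]; simp
  have hyl' : y'.length = b'.length + bs'.flatten.length := by
    rw [hy']; simp
  -- lengths of the schemes
  have hzl : zs.length = ka + kb + x.length + y.length := by
    rw [hz]
    simp only [List.length_append, interact_length]
    omega
  have hzl' : zs'.length = ka + kb + x'.length + y'.length := by
    rw [hz']
    simp only [List.length_append, interact_length]
    omega
  obtain ⟨t, ht⟩ := hpre
  -- take agreement
  have htake : ∀ n, n ≤ zs.length → zs'.take n = zs.take n := by
    intro n hn
    rw [← ht, List.take_append_of_le_length hn]
  -- Step 1: C = C'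
  have hCC : C = C' := by
    have h1 : zs.take ka = C := by
      rw [hz, ← hCl]
      rw [List.append_assoc, List.append_assoc, List.append_assoc,
        List.take_left]
    have h2 : zs'.take ka = C' := by
      rw [hz', ← hCl']
      rw [List.append_assoc, List.append_assoc, List.append_assoc,
        List.take_left]
    rw [← h1, ← h2, htake ka (by omega)]
  -- consequences: x.length = x'.length, a.length = a'.length
  have hxx : x.length = x'.length := by
    have e1 : C.getLast? = some x.length := by
      rw [hC, accLengths_getLast? _ _ (by simp), hx]; simp
    have e2 : C'.getLast? = some x'.length := by
      rw [hC', accLengths_getLast? _ _ (by simp), hx']; simp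
    rw [hCC, e2] at e1
    exact (Option.some_inj.mp e1).symm
  have haa : a.length = a'.length := by
    have e1 : C.head? = some a.length := by rw [hC, accLengths]; simp
    have e2 : C'.head? = some a'.length := by rw [hC', accLengths]; simp
    rw [hCC, e2] at e1
    exact (Option.some_inj.mp e1).symm
  -- Step 2: D = D'
  have hDD : D = D' := by
    have h1 : zs.take (ka + a.length + kb) = C ++ a ++ D := by
      rw [hz, ← hCl, ← hDl]
      rw [List.append_assoc (C ++ a), List.append_assoc (C ++ a)]
      have : C.length + a.length + D.length = (C ++ a).length + D.length := by
        simp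
      rw [this, List.take_length_add_append, List.append_assoc D, List.take_left]
    have h2 : zs'.take (ka + a.length + kb) = C' ++ a' ++ D' := by
      rw [hz', ← hCl', ← hDl', haa]
      rw [List.append_assoc (C' ++ a'), List.append_assoc (C' ++ a')]
      have : C'.length + a'.length + D'.length = (C' ++ a').length + D'.length := by
        simp
      rw [this, List.take_length_add_append, List.append_assoc D', List.take_left]
    have hle : ka + a.length + kb ≤ zs.length := by
      rw [hzl]; omega
    have he : C ++ a ++ D = C' ++ a' ++ D' := by
      rw [← h1, ← h2, htake _ hle]
    have := (List.append_inj he (by simp [hCl, hCl', haa])).2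
    exact this
  have hyy : y.length = y'.length := by
    have e1 : D.getLast? = some y.length := by
      rw [hD, accLengths_getLast? _ _ (by simp), hy]; simp
    have e2 : D'.getLast? = some y'.length := by
      rw [hD', accLengths_getLast? _ _ (by simp), hy']; simp
    rw [hDD, e2] at e1
    exact (Option.some_inj.mp e1).symm
  -- conclude
  have : zs.length = zs'.length := by rw [hzl, hzl', hxx, hyy]
  have hlen := congrArg List.length ht
  simp only [List.length_append] at hlen
  have ht0 : t = [] := List.length_eq_zero_iff.mp (by omega)
  rw [← ht, ht0, List.append_nil]

/-- Larson's Lemma 3.11: for `l > 0`, the set of interaction schemes of pairs of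
form `l` is thin: no one is a proper initial segment (prefix) of another. -/
theorem inter_scheme_thin (l : ℕ) (hl : 0 < l) (x y zs x' y' zs' : List ℕ)
    (h : InterScheme l x y zs) (h' : InterScheme l x' y' zs')
    (hpre : zs <+: zs') : zs = zs' := by
  rcases h with ⟨k, hk, hlk, hf⟩ | ⟨k, hk, hlk, hf⟩ <;>
    rcases h' with ⟨k', hk', hlk', hf'⟩ | ⟨k', hk', hlk', hf'⟩
  · have : k = k' := by omega
    subst this
    exact formBody_thin k k x y zs x' y' zs' hf hf' hpre
  · omega
  · omega
  · have : k = k' := by omega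
    subst this
    exact formBody_thin (k + 1) k x y zs x' y' zs' hf hf' hpre
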